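/- Let X be a finite-dimensional real normed vector space, let N ≥ 1 be an integer, let σ_1, …, σ_N be positive real numbers with σ_1 + ⋯ + σ_N ≥ 1, let α ∈ (0,1), and let c, C, p be positive real numbers. Then there exist M > 0 and λ ∈ (0,1) with the following property: for every function V : X → ℝ satisfying c·‖x‖^p ≤ V(x) ≤ C·‖x‖^p for all x ∈ X, every sequence x : ℕ → X, and every strictly increasing sequence τ : ℕ → ℕ with τ_0 = 0 and 1 ≤ τ_{κ+1} − τ_κ ≤ N for all κ, such that (i) V(x(τ_{κ+1})) ≤ (1−α)·V(x(τ_κ)) for all κ, and (ii) for every κ there exists a finite sequence y_0, y_1, …, y_N in X with y_k = x(τ_κ + k) for all 0 ≤ k ≤ τ_{κ+1} − τ_κ and Σ_{k=1}^N σ_k·V(y_k) ≤ (1−α)·V(y_0), it holds that ‖x(t)‖ ≤ M·λ^t·‖x(0)‖ for every t ∈ ℕ. -/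
import Mathlib


/-- Trajectory-level content of Theorem 1 (flexible-step MPC for known
LTI systems).  If V is sandwiched between c‖x‖^p and C‖x‖^p, decays by the factor
(1-α) along sampling times τ_κ with gaps between 1 and N, and at each sampling time
the trajectory coincides with an initial segment of a predicted sequence
y₀,…,y_N satisfying the average descent condition ∑_{k=1}^N σ_k V(y_k) ≤ (1-α)V(y₀),
then the state norm decays exponentially with uniform constants M, λ. -/
theorem stmt_3 (X : Type*) [NormedAddCommGroup X] [NormedSpace ℝ X]
    [FiniteDimensional ℝ X]
    (N : ℕ) (hN : 1 ≤ N) (σ : ℕ → ℝ)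
    (hσpos : ∀ k ∈ Finset.Icc 1 N, 0 < σ k)
    (hσsum : 1 ≤ ∑ k ∈ Finset.Icc 1 N, σ k)
    (α : ℝ) (hα0 : 0 < α) (hα1 : α < 1)
    (c C p : ℝ) (hc : 0 < c) (hC : 0 < C) (hp : 0 < p) :
    ∃ M > 0, ∃ lam ∈ Set.Ioo (0 : ℝ) 1,
      ∀ (V : X → ℝ) (x : ℕ → X) (τ : ℕ → ℕ),
        (∀ z : X, c * ‖z‖ ^ p ≤ V z) →
        (∀ z : X, V z ≤ C * ‖z‖ ^ p) →
        StrictMono τ →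
        τ 0 = 0 →
        (∀ κ : ℕ, 1 ≤ τ (κ + 1) - τ κ) →
        (∀ κ : ℕ, τ (κ + 1) - τ κ ≤ N) →
        (∀ κ : ℕ, V (x (τ (κ + 1))) ≤ (1 - α) * V (x (τ κ))) →
        (∀ κ : ℕ, ∃ y : ℕ → X,
            (∀ k ≤ τ (κ + 1) - τ κ, y k = x (τ κ + k)) ∧
            ∑ k ∈ Finset.Icc 1 N, σ k * V (y k) ≤ (1 - α) * V (y 0)) →
        ∀ t : ℕ, ‖x t‖ ≤ M * lam ^ t * ‖x 0‖ := by
  have h1α : 0 < 1 - α := by linarith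
  have h1α' : 1 - α < 1 := by linarith
  have hN0 : (0:ℝ) < N := by exact_mod_cast hN
  have hIcc : (Finset.Icc 1 N).Nonempty := Finset.nonempty_Icc.mpr hN
  set σm := (Finset.Icc 1 N).inf' hIcc σ with hσmdef
  have hσm0 : 0 < σm := (Finset.lt_inf'_iff hIcc).mpr (fun k hk => hσpos k hk)
  set B := max 1 ((1 - α) / σm) with hBdef
  have hB1 : (1:ℝ) ≤ B := le_max_left _ _
  have hB0 : (0:ℝ) < B := lt_of_lt_of_le one_pos hB1
  set K := C * B / (c * (1 - α)) with hKdef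
  have hK0 : 0 < K := by positivity
  set L : ℝ := (1 - α) ^ ((1:ℝ) / N) with hLdef
  have hL0 : 0 < L := Real.rpow_pos_of_pos h1α _
  set lam : ℝ := (1 - α) ^ ((1:ℝ) / (N * p)) with hlamdef
  have hlam0 : 0 < lam := Real.rpow_pos_of_pos h1α _
  have hlam1 : lam < 1 := Real.rpow_lt_one h1α.le h1α' (by positivity)
  refine ⟨max 1 (K ^ ((1:ℝ)/p)), lt_of_lt_of_le one_pos (le_max_left _ _),
    lam, ⟨hlam0, hlam1⟩, ?_⟩
  intro V x τ hVl hVu hmono hτ0 hgap1 hgapN hdec hpred t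
  have hVnn : ∀ z : X, 0 ≤ V z := fun z =>
    le_trans (by positivity) (hVl z)
  -- upper bound on τ
  have hτub : ∀ κ, τ κ ≤ κ * N := by
    intro κ
    induction κ with
    | zero => simp [hτ0]
    | succ n ih =>
      have h := hgapN n
      have hlt := hmono (Nat.lt_succ_self n)
      have : τ (n+1) ≤ τ n + N := by omega
      calc τ (n+1) ≤ τ n + N := this
        _ ≤ n * N + N := by omega
        _ = (n+1) * N := by ring
  -- V decay along sampling times
  have hVτ : ∀ κ, V (x (τ κ)) ≤ (1 - α) ^ κ * V (x 0) := by
    intro κ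
    induction κ with
    | zero => simp [hτ0]
    | succ n ih =>
      calc V (x (τ (n+1))) ≤ (1 - α) * V (x (τ n)) := hdec n
        _ ≤ (1 - α) * ((1 - α) ^ n * V (x 0)) :=
            mul_le_mul_of_nonneg_left ih h1α.le
        _ = (1 - α) ^ (n+1) * V (x 0) := by ring
  -- intermediate step bound
  have hstep : ∀ κ k, 1 ≤ k → k ≤ τ (κ+1) - τ κ →
      V (x (τ κ + k)) ≤ B * V (x (τ κ)) := by
    intro κ k hk1 hk2
    obtain ⟨y, hy, hsum⟩ := hpred κ
    have hkN : k ≤ N := le_trans hk2 (hgapN κ)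
    have hmem : k ∈ Finset.Icc 1 N := Finset.mem_Icc.mpr ⟨hk1, hkN⟩
    have hterm : σ k * V (y k) ≤ (1 - α) * V (y 0) :=
      le_trans (Finset.single_le_sum
        (fun j hj => mul_nonneg (hσpos j hj).le (hVnn _)) hmem) hsum
    have hy0 : y 0 = x (τ κ) := by simpa using hy 0 (Nat.zero_le _)
    have hyk : y k = x (τ κ + k) := hy k hk2
    rw [hy0, hyk] at hterm
    have hσk : σm ≤ σ k := Finset.inf'_le σ hmem
    have hmain : V (x (τ κ + k)) ≤ ((1 - α) / σm) * V (x (τ κ)) := by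
      rw [div_mul_eq_mul_div, le_div_iff₀ hσm0]
      nlinarith [hVnn (x (τ κ + k)), hσpos k hmem]
    calc V (x (τ κ + k)) ≤ ((1 - α) / σm) * V (x (τ κ)) := hmain
      _ ≤ B * V (x (τ κ)) :=
          mul_le_mul_of_nonneg_right (le_max_right _ _) (hVnn _)
  -- locate t between sampling times
  have hexm : ∃ m, t < τ m :=
    ⟨t + 1, lt_of_lt_of_le (Nat.lt_succ_self t) (hmono.le_apply)⟩
  have hex : ∃ κ, τ κ ≤ t ∧ t < τ (κ+1) := by
    have hm : t < τ (Nat.find hexm) := Nat.find_spec hexm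
    have hm0 : Nat.find hexm ≠ 0 := by
      intro h
      rw [h, hτ0] at hm
      omega
    obtain ⟨κ, hκ⟩ := Nat.exists_eq_succ_of_ne_zero hm0
    refine ⟨κ, ?_, ?_⟩
    · have := Nat.find_min hexm (m := κ) (by omega)
      omega
    · have h := hm
      rw [hκ] at h
      exact h
  obtain ⟨κ, hκ1, hκ2⟩ := hex
  -- V bound at time t
  have hVt : V (x t) ≤ B * ((1 - α) ^ κ * V (x 0)) := by
    rcases Nat.eq_or_lt_of_le hκ1 with heq | hlt
    · rw [← heq]
      calc V (x (τ κ)) ≤ (1 - α) ^ κ * V (x 0) := hVτ κ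
        _ ≤ B * ((1 - α) ^ κ * V (x 0)) :=
            le_mul_of_one_le_left (mul_nonneg (pow_nonneg h1α.le κ) (hVnn _)) hB1
    · have hkeq : t = τ κ + (t - τ κ) := by omega
      have h1 : 1 ≤ t - τ κ := by omega
      have h2 : t - τ κ ≤ τ (κ+1) - τ κ := by omega
      calc V (x t) = V (x (τ κ + (t - τ κ))) := by rw [← hkeq]
        _ ≤ B * V (x (τ κ)) := hstep κ _ h1 h2
        _ ≤ B * ((1 - α) ^ κ * V (x 0)) :=
            mul_le_mul_of_nonneg_left (hVτ κ) hB0.le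
  -- geometric bound: (1-α)*(1-α)^κ ≤ L^t
  have htκ : (t:ℝ) / N ≤ (κ:ℝ) + 1 := by
    rw [div_le_iff₀ hN0]
    have h1 : t ≤ (κ+1) * N := (lt_of_lt_of_le hκ2 (hτub (κ+1))).le
    exact_mod_cast h1
  have hpowκ : (1 - α) * (1 - α) ^ κ ≤ L ^ t := by
    have h1 : ((1 - α) : ℝ) ^ ((κ:ℝ) + 1) ≤ (1 - α) ^ ((t:ℝ)/N) :=
      Real.rpow_le_rpow_of_exponent_ge h1α h1α'.le htκ
    have h2 : ((1 - α) : ℝ) ^ ((κ:ℝ) + 1) = (1 - α) * (1 - α) ^ κ := by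
      rw [Real.rpow_add h1α, Real.rpow_one, Real.rpow_natCast]
      ring
    have h3 : ((1 - α) : ℝ) ^ ((t:ℝ)/N) = L ^ t := by
      rw [hLdef, ← Real.rpow_natCast ((1 - α) ^ ((1:ℝ)/N)) t,
        ← Real.rpow_mul h1α.le]
      congr 1
      ring
    rw [h2, h3] at h1
    exact h1
  -- main norm-power bound
  have hnormp : ‖x t‖ ^ p ≤ K * L ^ t * ‖x 0‖ ^ p := by
    have h1 : c * ‖x t‖ ^ p ≤ V (x t) := hVl (x t)
    have h2 : V (x 0) ≤ C * ‖x 0‖ ^ p := hVu (x 0)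
    have h4 : c * (1 - α) * ‖x t‖ ^ p ≤ C * B * (L ^ t * ‖x 0‖ ^ p) := by
      calc c * (1 - α) * ‖x t‖ ^ p = (1 - α) * (c * ‖x t‖ ^ p) := by ring
        _ ≤ (1 - α) * V (x t) := mul_le_mul_of_nonneg_left h1 h1α.le
        _ ≤ (1 - α) * (B * ((1 - α) ^ κ * V (x 0))) :=
            mul_le_mul_of_nonneg_left hVt h1α.le
        _ = B * (((1 - α) * (1 - α) ^ κ) * V (x 0)) := by ring
        _ ≤ B * (L ^ t * V (x 0)) := by
            apply mul_le_mul_of_nonneg_left _ hB0.le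
            exact mul_le_mul_of_nonneg_right hpowκ (hVnn _)
        _ ≤ B * (L ^ t * (C * ‖x 0‖ ^ p)) := by
            apply mul_le_mul_of_nonneg_left _ hB0.le
            exact mul_le_mul_of_nonneg_left h2 (pow_nonneg hL0.le t)
        _ = C * B * (L ^ t * ‖x 0‖ ^ p) := by ring
    rw [hKdef, div_mul_eq_mul_div, div_mul_eq_mul_div,
      le_div_iff₀ (by positivity)]
    nlinarith [h4]
  -- take the (1/p)-th power
  have hroot : ∀ a : ℝ, 0 ≤ a → (a ^ p) ^ ((1:ℝ)/p) = a := by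
    intro a ha
    rw [← Real.rpow_mul ha, mul_one_div, div_self hp.ne', Real.rpow_one]
  have hLlam : L ^ ((1:ℝ)/p) = lam := by
    rw [hLdef, hlamdef, ← Real.rpow_mul h1α.le]
    congr 1
    field_simp
  have hfinal : ‖x t‖ ≤ K ^ ((1:ℝ)/p) * lam ^ t * ‖x 0‖ := by
    have hmono' : (‖x t‖ ^ p) ^ ((1:ℝ)/p) ≤ (K * L ^ t * ‖x 0‖ ^ p) ^ ((1:ℝ)/p) :=
      Real.rpow_le_rpow (by positivity) hnormp (by positivity)
    rw [hroot _ (norm_nonneg _)] at hmono'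
    have hrhs : (K * L ^ t * ‖x 0‖ ^ p) ^ ((1:ℝ)/p)
        = K ^ ((1:ℝ)/p) * lam ^ t * ‖x 0‖ := by
      rw [Real.mul_rpow (by positivity) (by positivity),
        Real.mul_rpow (by positivity) (by positivity),
        hroot _ (norm_nonneg _)]
      congr 1
      congr 1
      rw [← Real.rpow_natCast L t, ← Real.rpow_mul hL0.le, mul_comm (t:ℝ),
        Real.rpow_mul hL0.le, hLlam, Real.rpow_natCast]
    rw [hrhs] at hmono'
    exact hmono'
  calc ‖x t‖ ≤ K ^ ((1:ℝ)/p) * lam ^ t * ‖x 0‖ := hfinal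
    _ ≤ max 1 (K ^ ((1:ℝ)/p)) * lam ^ t * ‖x 0‖ := by
        apply mul_le_mul_of_nonneg_right _ (norm_nonneg _)
        exact mul_le_mul_of_nonneg_right (le_max_right _ _) (pow_nonneg hlam0.le t)
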